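/- Let h be analytic at x₀ with h'(x₀) ≠ 0, let f(x) = 1/h'(x), and assume 0 < |f(x₀)| < ∞. Set z₀ = h(x₀). Then h has a local analytic inverse h⁻¹ near z₀, and on a neighborhood of z₀, h⁻¹(z) = x₀ + f(x₀) · Σ_{n=1}^∞ 𝔇^{n−1}[f](x₀) · (z − z₀)^n / n!. -/

import Mathlib

open Filter Topology

/-- The `n`-th nested derivative `𝔇ⁿ[f]`, defined by `𝔇⁰[f] = 1` and
`𝔇ⁿ⁺¹[f] = (f · 𝔇ⁿ[f])'`. -/
noncomputable def nestedDeriv (f : ℝ → ℝ) : ℕ → ℝ → ℝ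
  | 0 => fun _ => 1
  | n + 1 => deriv fun x => f x * nestedDeriv f n x

/-- If `h` is analytic at `x₀` with `h'(x₀) ≠ 0`, `f = 1/h'` with `0 < |f x₀| < ∞`, and
`z₀ = h x₀`, then `h` has a local analytic inverse `H` near `z₀` and
`H z = x₀ + f x₀ · ∑_{n≥1} 𝔇ⁿ⁻¹[f](x₀) (z - z₀)ⁿ / n!` near `z₀`. -/
theorem inverse_series_nested_deriv (h : ℝ → ℝ) (x₀ : ℝ)
    (hh : AnalyticAt ℝ h x₀) (hh' : deriv h x₀ ≠ 0)
    (f : ℝ → ℝ) (hf : ∀ x, f x = 1 / deriv h x)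
    (hf0 : 0 < |f x₀|) (z₀ : ℝ) (hz₀ : z₀ = h x₀) :
    ∃ H : ℝ → ℝ, AnalyticAt ℝ H z₀ ∧ (∀ᶠ x in 𝓝 x₀, H (h x) = x) ∧
      ∀ᶠ z in 𝓝 z₀, HasSum
        (fun n : ℕ => f x₀ * nestedDeriv f n x₀ * (z - z₀) ^ (n + 1) / ((n + 1).factorial : ℝ))
        (H z - x₀) := by
  subst hz₀
  -- ### Part 1: construction of the local analytic inverse
  obtain ⟨p, hp⟩ := hh
  have hh : AnalyticAt ℝ h x₀ := ⟨p, hp⟩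
  have hs : HasStrictDerivAt h (deriv h x₀) x₀ := by
    have := hp.hasStrictDerivAt
    rwa [← hp.deriv] at this
  have hsF := hs.hasStrictFDerivAt_equiv hh'
  set φ := HasStrictFDerivAt.toOpenPartialHomeomorph h hsF with hφ
  have hx₀ : x₀ ∈ φ.source := HasStrictFDerivAt.mem_toOpenPartialHomeomorph_source hsF
  have hp1 : p 1 = (continuousMultilinearCurryFin1 ℝ ℝ ℝ).symm
      (ContinuousLinearEquiv.unitsEquivAut ℝ (Units.mk0 (deriv h x₀) hh') : ℝ →L[ℝ] ℝ) := by
    refine ContinuousMultilinearMap.ext fun v => ?_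
    have hv : v = fun _ : Fin 1 => v 0 := by
      funext i; rw [Subsingleton.elim i 0]
    rw [hv]
    rw [p.apply_eq_pow_smul_coeff]
    have : p.coeff 1 = deriv h x₀ := hp.deriv.symm
    rw [this]
    simp only [pow_one, smul_eq_mul, continuousMultilinearCurryFin1_symm_apply,
      ContinuousLinearEquiv.coe_coe, ContinuousLinearEquiv.unitsEquivAut_apply, Units.val_mk0]
  have hsymm := φ.hasFPowerSeriesAt_symm hx₀ (hp : HasFPowerSeriesAt φ p x₀) hp1
  set H : ℝ → ℝ := ⇑φ.symm with hHdef
  have hHa : AnalyticAt ℝ H (h x₀) := ⟨_, hsymm⟩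
  have hleft : ∀ᶠ x in 𝓝 x₀, H (h x) = x := φ.eventually_left_inverse hx₀
  have hright : ∀ᶠ z in 𝓝 (h x₀), h (H z) = z := φ.eventually_right_inverse' hx₀
  -- ### Part 2: the iterated derivatives of `H` at `h x₀`
  have hHx₀ : H (h x₀) = x₀ := hleft.self_of_nhds
  have hev : ∀ᶠ x in 𝓝 x₀, AnalyticAt ℝ h x ∧ deriv h x ≠ 0 := by
    have h1 := hh.eventually_analyticAt
    have h2 : ∀ᶠ x in 𝓝 x₀, deriv h x ≠ 0 := by
      have hc : ContinuousAt (deriv h) x₀ := by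
        obtain ⟨s, hs, han⟩ := hh.exists_mem_nhds_analyticOnNhd
        exact ((han.deriv x₀ (mem_of_mem_nhds hs)).continuousAt)
      exact hc.eventually_ne hh'
    exact h1.and h2
  obtain ⟨U, hUsub, hUo, hxU⟩ := eventually_nhds_iff.1 hev
  have hhU : AnalyticOnNhd ℝ h U := fun x hx => (hUsub x hx).1
  have hfU : AnalyticOnNhd ℝ f U := by
    have : AnalyticOnNhd ℝ (fun x => (deriv h x)⁻¹) U :=
      fun x hx => ((hhU.deriv x hx).inv (hUsub x hx).2)
    have hfe : f = fun x => (deriv h x)⁻¹ := by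
      funext x; rw [hf x, one_div]
    rwa [hfe]
  have hnest : ∀ m, AnalyticOnNhd ℝ (nestedDeriv f m) U := by
    intro m
    induction m with
    | zero => exact fun x _ => analyticAt_const
    | succ k ih =>
        show AnalyticOnNhd ℝ (deriv fun x => f x * nestedDeriv f k x) U
        exact (hfU.mul ih).deriv_of_isOpen hUo
  have hHU : ∀ᶠ z in 𝓝 (h x₀), H z ∈ U := by
    have : ContinuousAt H (h x₀) := hHa.continuousAt
    exact this.eventually_mem (hUo.mem_nhds (by rw [hHx₀]; exact hxU))
  have hd : ∀ᶠ z in 𝓝 (h x₀), deriv H z = f (H z) := by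
    filter_upwards [hHU, hright.eventually_nhds, hHa.eventually_analyticAt] with z hzU hz hHz
    have hdiffH : DifferentiableAt ℝ H z := hHz.differentiableAt
    have hdiffh : DifferentiableAt ℝ h (H z) := (hUsub _ hzU).1.differentiableAt
    have h1 : deriv (h ∘ H) z = 1 := by
      have : (h ∘ H) =ᶠ[𝓝 z] id := hz.mono fun w hw => hw
      rw [this.deriv_eq]; exact deriv_id z
    have h2 : deriv h (H z) * deriv H z = 1 := by
      rw [← deriv_comp z hdiffh hdiffH]; exact h1
    rw [hf, eq_div_iff (hUsub _ hzU).2, mul_comm]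
    exact h2
  have main : ∀ m, ∀ᶠ z in 𝓝 (h x₀),
      iteratedDeriv (m+1) H z = f (H z) * nestedDeriv f m (H z) := by
    intro m
    induction m with
    | zero =>
        filter_upwards [hd] with z hz
        rw [iteratedDeriv_one, hz]
        simp [nestedDeriv]
    | succ k ih =>
        have hde : deriv (iteratedDeriv (k+1) H) =ᶠ[𝓝 (h x₀)]
            deriv (fun z => f (H z) * nestedDeriv f k (H z)) :=
          Filter.EventuallyEq.deriv ih
        filter_upwards [hde, hHU, hHa.eventually_analyticAt, hd] with z hz hzU hHz hdz
        rw [iteratedDeriv_succ, hz]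
        have hg : DifferentiableAt ℝ (fun x => f x * nestedDeriv f k x) (H z) :=
          ((hfU _ hzU).mul (hnest k _ hzU)).differentiableAt
        have : deriv ((fun x => f x * nestedDeriv f k x) ∘ H) z
            = deriv (fun x => f x * nestedDeriv f k x) (H z) * deriv H z :=
          deriv_comp z hg hHz.differentiableAt
        rw [show (fun z => f (H z) * nestedDeriv f k (H z))
            = (fun x => f x * nestedDeriv f k x) ∘ H from rfl, this, hdz]
        show _ = f (H z) * nestedDeriv f (k+1) (H z)
        rw [show nestedDeriv f (k+1) = deriv (fun x => f x * nestedDeriv f k x) from rfl]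
        ring
  have hc : ∀ n, iteratedDeriv (n+1) H (h x₀) = f x₀ * nestedDeriv f n x₀ := by
    intro n
    have := (main n).self_of_nhds
    rwa [hHx₀] at this
  -- ### Part 3: the power series expansion as a `HasSum` statement
  refine ⟨H, hHa, hleft, ?_⟩
  obtain ⟨q, hq⟩ := hHa
  obtain ⟨r, hr⟩ := hq
  filter_upwards [EMetric.ball_mem_nhds (h x₀) hr.r_pos] with z hz
  have hy : z - h x₀ ∈ EMetric.ball (0 : ℝ) r := by
    exact (by simpa [Metric.mem_eball, edist_dist, dist_eq_norm] using hz : z - h x₀ ∈ Metric.eball (0 : ℝ) r)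
  have S := hr.hasSum_iteratedFDeriv hy
  rw [add_sub_cancel] at S
  have hterm : ∀ n : ℕ, ((n.factorial : ℝ))⁻¹ • iteratedFDeriv ℝ n H (h x₀) (fun _ => z - h x₀)
      = iteratedDeriv n H (h x₀) * (z - h x₀)^n / (n.factorial : ℝ) := by
    intro n
    have h1 : (fun _ : Fin n => z - h x₀) = fun _ : Fin n => (z - h x₀) • (1 : ℝ) := by
      funext i; simp
    rw [h1, ContinuousMultilinearMap.map_smul_univ, ← iteratedDeriv_eq_iteratedFDeriv]
    simp [smul_eq_mul]
    ring
  rw [funext hterm] at S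
  have S2 := (hasSum_nat_add_iff' 1).2 S
  simp only [Finset.range_one, Finset.sum_singleton, iteratedDeriv_zero, pow_zero,
    Nat.factorial_zero, Nat.cast_one, mul_one, div_one, hHx₀] at S2
  simp only [hc] at S2
  exact S2
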